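/- arXiv:1202.1067 — 2 statements merged into one kernel-verified Lean document; each statement's English description precedes it below -/
import Mathlib

section
/- Let s ∈ ℝ and define sequences a_ℓ = -2ℓ+1 and b_ℓ = (ℓ-1)²(ℓ(ℓ-2) - s(s-2)). In an inner product space V with mutually orthogonal vectors v_ℓ (ℓ ≥ 0) satisfying ‖v_0‖ = 1, v_1 = -H v_0 for some linear operator H, and the recursion v_{ℓ+1} = a_{ℓ+1} H v_ℓ + b_{ℓ+1} v_{ℓ-1}, together with the skew-symmetry relation ⟨H v_{ℓ-1}, v_ℓ⟩ = -⟨v_{ℓ-1}, H v_ℓ⟩, one has ‖v_ℓ‖² = (1/(2ℓ+1)) · ∏_{j=1}^{ℓ} j²(j²-1 - s(s-2)) for all ℓ ≥ 0. -/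
open scoped InnerProductSpace

/-- Norms of the ladder vectors: ‖v_ℓ‖² = (1/(2ℓ+1))·∏_{j=1}^{ℓ} j²(j²-1-s(s-2)). -/
theorem ladder_vector_norm
    {V : Type*} [NormedAddCommGroup V] [InnerProductSpace ℂ V]
    (s : ℝ) (H : V →ₗ[ℂ] V) (v : ℕ → V)
    (a : ℕ → ℝ) (b : ℕ → ℝ)
    (ha : ∀ l : ℕ, a l = -2*(l:ℝ)+1)
    (hb : ∀ l : ℕ, b l = ((l:ℝ)-1)^2 * ((l:ℝ)*((l:ℝ)-2) - s*(s-2)))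
    (horth : ∀ i j : ℕ, i ≠ j → ⟪v i, v j⟫_ℂ = 0)
    (hnorm0 : ‖v 0‖ = 1)
    (hv1 : v 1 = -H (v 0))
    (hrec : ∀ ℓ : ℕ, 1 ≤ ℓ → v (ℓ+1) = (a (ℓ+1) : ℂ) • H (v ℓ) + (b (ℓ+1) : ℂ) • v (ℓ-1))
    (hskew : ∀ i j : ℕ, ⟪H (v i), v j⟫_ℂ = -⟪v i, H (v j)⟫_ℂ) :
    ∀ ℓ : ℕ, ‖v ℓ‖^2
      = (1/(2*(ℓ:ℝ)+1)) * ∏ j ∈ Finset.Icc 1 ℓ, ((j:ℝ)^2 * ((j:ℝ)^2 - 1 - s*(s-2))) := by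
  -- recursion valid also for ℓ = 0
  have hrec' : ∀ ℓ : ℕ, v (ℓ+1) = (a (ℓ+1) : ℂ) • H (v ℓ) + (b (ℓ+1) : ℂ) • v (ℓ-1) := by
    intro ℓ
    cases ℓ with
    | zero =>
      have hb1 : b 1 = 0 := by rw [hb]; norm_num
      have ha1 : a 1 = -1 := by rw [ha]; norm_num
      simp [hb1, ha1, hv1]
    | succ n => exact hrec (n+1) (Nat.succ_le_succ (Nat.zero_le n))
  -- step formula
  have hstep : ∀ ℓ : ℕ, ‖v (ℓ+1)‖^2 = (a (ℓ+1) * b (ℓ+2) / a (ℓ+2)) * ‖v ℓ‖^2 := by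
    intro ℓ
    have ha2 : (a (ℓ+2) : ℂ) ≠ 0 := by
      rw [ha]; push_cast
      intro h
      have : (2:ℂ) * (ℓ:ℂ) + 3 = 0 := by linear_combination -h
      have : (2:ℝ) * (ℓ:ℝ) + 3 = 0 := by exact_mod_cast this
      have := Nat.cast_nonneg (α := ℝ) ℓ; linarith
    -- H (v (ℓ+1)) in terms of v (ℓ+2) and v ℓ
    have hH : (a (ℓ+2) : ℂ) • H (v (ℓ+1)) = v (ℓ+2) - (b (ℓ+2) : ℂ) • v ℓ := by
      have h := hrec (ℓ+1) (Nat.succ_le_succ (Nat.zero_le ℓ))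
      simp only [Nat.add_sub_cancel] at h
      rw [h]; abel
    have key : ⟪v (ℓ+1), v (ℓ+1)⟫_ℂ
        = ((a (ℓ+1) * b (ℓ+2) / a (ℓ+2) : ℝ) : ℂ) * ⟪v ℓ, v ℓ⟫_ℂ := by
      have e1 : ⟪v (ℓ+1), v (ℓ+1)⟫_ℂ
          = (a (ℓ+1) : ℂ) * ⟪H (v ℓ), v (ℓ+1)⟫_ℂ := by
        nth_rewrite 1 [hrec' ℓ]
        rw [inner_add_left, inner_smul_left, inner_smul_left,
          horth (ℓ-1) (ℓ+1) (by omega)]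
        simp [Complex.conj_ofReal]
      have e2 : (a (ℓ+2) : ℂ) * ⟪v ℓ, H (v (ℓ+1))⟫_ℂ
          = -(b (ℓ+2) : ℂ) * ⟪v ℓ, v ℓ⟫_ℂ := by
        rw [← inner_smul_right, hH, inner_sub_right, inner_smul_right,
          horth ℓ (ℓ+2) (by omega)]
        ring
      have e3 : ⟪v ℓ, H (v (ℓ+1))⟫_ℂ
          = -(b (ℓ+2) : ℂ) / (a (ℓ+2) : ℂ) * ⟪v ℓ, v ℓ⟫_ℂ := by
        field_simp
        linear_combination e2
      rw [e1, hskew ℓ (ℓ+1), e3]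
      push_cast
      field_simp
    rw [inner_self_eq_norm_sq_to_K (𝕜 := ℂ), inner_self_eq_norm_sq_to_K (𝕜 := ℂ)] at key
    push_cast at key
    apply Complex.ofReal_injective
    push_cast
    exact key
  -- induction
  intro ℓ
  induction ℓ with
  | zero => simp [hnorm0]
  | succ n ih =>
    rw [hstep n, ih, ha, ha, hb]
    rw [Finset.prod_Icc_succ_top (Nat.succ_le_succ (Nat.zero_le n))]
    set P : ℝ := ∏ j ∈ Finset.Icc 1 n, ((j:ℝ)^2 * ((j:ℝ)^2 - 1 - s*(s-2))) with hP
    have h1 : (2*(n:ℝ)+1) ≠ 0 := by positivity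
    have h2 : (2*(n:ℝ)+3) ≠ 0 := by positivity
    push_cast
    have hD : (-2*((n:ℝ)+2)+1) ≠ 0 := by
      have := Nat.cast_nonneg (α := ℝ) n; intro h; linarith
    have h2' : (2*((n:ℝ)+1)+1) ≠ 0 := by positivity
    rw [div_mul_eq_mul_div, div_eq_iff hD]
    field_simp
    ring
end

section
/- Define sequences a_ℓ = -2ℓ+1 and b_ℓ = (ℓ-1)²(ℓ(ℓ-2)-s(s-2)) for a fixed real s. Suppose vectors v_ℓ in a module over an associative algebra satisfy v_ℓ = a_ℓ·H̃v_{ℓ-1} + b_ℓ·v_{ℓ-2} for some operator H̃ and all 1 ≤ ℓ ≤ L (with v_{-1}=0), and suppose additionally that H̃v_{ℓ-1} relates to the recursion via Z_ℓ v_m = v_{m+1} + (m-ℓ)H̃v_m where Z_ℓ := Z + (m-ℓ)H̃ for operators satisfying Z_ℓ H̃ = H̃Z_ℓ + λ·Id - 2C_K - D² - H̃² on the span, C v_{ℓ-1} = λ v_{ℓ-1}, C_K v_{ℓ-1} = ℓ(ℓ-1)v_{ℓ-1}, D v_{ℓ-1} = 0, with λ = -s(2-s). Then v_{ℓ+1}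 := Z_ℓ v_ℓ satisfies v_{ℓ+1} = a_{ℓ+1}·H̃v_ℓ + b_{ℓ+1}·v_{ℓ-1}. -/
open Complex

/-- Inductive step of the ladder recursion: if v_ℓ = a_ℓ·H̃v_{ℓ-1} + b_ℓ·v_{ℓ-2}, then
v_{ℓ+1} := Z_ℓ v_ℓ satisfies v_{ℓ+1} = a_{ℓ+1}·H̃v_ℓ + b_{ℓ+1}·v_{ℓ-1}, where
a_l = -2l+1, b_l = (l-1)²(l(l-2)-s(s-2)). -/
theorem ladder_recursion_step {V : Type*} [AddCommGroup V] [Module ℂ V]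
    (s : ℝ) (Ht D C CK Zℓ : Module.End ℂ V) (ℓ : ℕ) (hℓ : 1 ≤ ℓ)
    (a b : ℕ → ℂ)
    (ha : ∀ l : ℕ, a l = -2*(l:ℂ)+1)
    (hb : ∀ l : ℕ, b l = ((l:ℂ)-1)^2 * ((l:ℂ)*((l:ℂ)-2) - (s:ℂ)*((s:ℂ)-2)))
    (vm2 vm1 vl : V)
    (hZH : Zℓ * Ht = Ht * Zℓ + C - (2:ℂ) • CK - D^2 - Ht^2)
    (hZvm1 : Zℓ vm1 = vl - Ht vm1)
    (hZvm2 : Zℓ vm2 = vm1 - (2:ℂ) • Ht vm2)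
    (hC : C vm1 = (-(s:ℂ)*(2-(s:ℂ))) • vm1)
    (hCK : CK vm1 = ((ℓ:ℂ)*((ℓ:ℂ)-1)) • vm1)
    (hD : D vm1 = 0)
    (hind : vl = a ℓ • Ht vm1 + b ℓ • vm2) :
    Zℓ vl = a (ℓ+1) • Ht vl + b (ℓ+1) • vm1 := by
  have h1 : Zℓ (Ht vm1) = Ht (Zℓ vm1) + C vm1 - (2:ℂ) • CK vm1 - D (D vm1) - Ht (Ht vm1) := by
    have h := congrFun (congrArg DFunLike.coe hZH) vm1
    simpa [Module.End.mul_apply, pow_two] using h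
  rw [hZvm1, hC, hCK, hD, map_zero, map_sub] at h1
  subst hind
  rw [map_add, map_smul, map_smul, h1, hZvm2]
  simp only [map_add, map_smul, ha, hb]
  push_cast
  match_scalars <;> ring
end
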